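/- Let C be a closed convex subset of a Hilbert space H and T : C → C nonexpansive with F(T) ≠ ∅. Then F(T) equals the set of asymptotic fixed points of T; i.e., if {x_n} ⊂ C converges weakly to p and ‖Tx_n − x_n‖ → 0, then Tp = p. -/

import Mathlib

/-- demiclosedness principle: If `T` is nonexpansive on a closed convex
`C` with a fixed point, `x_n ∈ C` converges weakly to `p`, and `‖Tx_n − x_n‖ → 0`,
then `p ∈ C` and `Tp = p`. -/
theorem demiclosedness_principle
    (H : Type*) [NormedAddCommGroup H] [InnerProductSpace ℝ H] [CompleteSpace H]
    (C : Set H) (hclosed : IsClosed C) (hconv : Convex ℝ C)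
    (T : H → H) (hT : Set.MapsTo T C C)
    (hne : ∀ x ∈ C, ∀ y ∈ C, ‖T x - T y‖ ≤ ‖x - y‖)
    (hfix : ∃ q ∈ C, T q = q)
    (x : ℕ → H) (hxC : ∀ n, x n ∈ C) (p : H)
    (hweak : ∀ v : H, Filter.Tendsto (fun n => (inner ℝ (x n) v : ℝ)) Filter.atTop
      (nhds (inner ℝ p v : ℝ)))
    (hTx : Filter.Tendsto (fun n => ‖T (x n) - x n‖) Filter.atTop (nhds 0)) :
    p ∈ C ∧ T p = p := by
  obtain ⟨q, hqC, -⟩ := hfix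
  -- weak limits of sequences minus p have inner products tending to the right thing
  have hweak' : ∀ v : H, Filter.Tendsto (fun n => (inner ℝ (x n - p) v : ℝ)) Filter.atTop
      (nhds 0) := by
    intro v
    have := (hweak v).sub (tendsto_const_nhds (x := (inner ℝ p v : ℝ)))
    simpa [inner_sub_left] using this
  -- Step 1: p ∈ C, via the metric projection onto C.
  have hpC : p ∈ C := by
    obtain ⟨v, hvC, hv⟩ := exists_norm_eq_iInf_of_complete_convex ⟨q, hqC⟩
      (hclosed.isComplete) hconv p
    have hchar := (norm_eq_iInf_iff_real_inner_le_zero hconv hvC).mp hv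
    -- ⟪p - v, x n - v⟫ ≤ 0 for all n; take limit
    have hlim : Filter.Tendsto (fun n => (inner ℝ (x n - v) (p - v) : ℝ)) Filter.atTop
        (nhds (inner ℝ (p - v) (p - v) : ℝ)) := by
      have h1 := (hweak (p - v)).sub (tendsto_const_nhds (x := (inner ℝ v (p - v) : ℝ)))
      have : (inner ℝ (p - v) (p - v) : ℝ) = inner ℝ p (p - v) - inner ℝ v (p - v) := by
        rw [inner_sub_left]
      rw [this]
      simpa [inner_sub_left] using h1
    have hle : (inner ℝ (p - v) (p - v) : ℝ) ≤ 0 := by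
      refine le_of_tendsto hlim (Filter.Eventually.of_forall fun n => ?_)
      have := hchar (x n) (hxC n)
      rwa [real_inner_comm] at this
    have : p - v = 0 := by
      have h0 : (inner ℝ (p - v) (p - v) : ℝ) = 0 :=
        le_antisymm hle (real_inner_self_nonneg)
      exact inner_self_eq_zero.mp h0
    have : p = v := by rwa [sub_eq_zero] at this
    rwa [this]
  refine ⟨hpC, ?_⟩
  -- Step 2: boundedness of (x n) via Banach–Steinhaus
  obtain ⟨M, hM⟩ : ∃ M, ∀ n, ‖(innerSL ℝ (x n) : H →L[ℝ] ℝ)‖ ≤ M := by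
    apply banach_steinhaus
    intro v
    have : Filter.Tendsto (fun n => ‖(inner ℝ (x n) v : ℝ)‖) Filter.atTop
        (nhds ‖(inner ℝ p v : ℝ)‖) := (hweak v).norm
    obtain ⟨B, hB⟩ := this.bddAbove_range
    exact ⟨B, fun n => hB ⟨n, rfl⟩⟩
  have hnorm : ∀ n, ‖x n‖ ≤ M := fun n => by
    have := hM n; rwa [innerSL_apply_norm] at this
  -- Step 3: key inequality
  set ε : ℕ → ℝ := fun n => ‖T (x n) - x n‖ with hε
  have hεnn : ∀ n, 0 ≤ ε n := fun n => norm_nonneg _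
  have key : ∀ n, ‖p - T p‖ ^ 2 ≤
      2 * ε n * (M + ‖p‖) + ε n ^ 2 - 2 * (inner ℝ (x n - p) (p - T p) : ℝ) := by
    intro n
    have hxnp : ‖x n - p‖ ≤ M + ‖p‖ := by
      calc ‖x n - p‖ ≤ ‖x n‖ + ‖p‖ := norm_sub_le _ _
        _ ≤ M + ‖p‖ := by linarith [hnorm n]
    have hexp : ‖x n - T p‖ ^ 2 =
        ‖x n - p‖ ^ 2 + 2 * (inner ℝ (x n - p) (p - T p) : ℝ) + ‖p - T p‖ ^ 2 := by
      have := norm_add_sq_real (x n - p) (p - T p)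
      simpa [sub_add_sub_cancel] using this
    have htri : ‖x n - T p‖ ≤ ε n + ‖x n - p‖ := by
      calc ‖x n - T p‖ ≤ ‖x n - T (x n)‖ + ‖T (x n) - T p‖ := norm_sub_le_norm_sub_add_norm_sub _ _ _
        _ ≤ ε n + ‖x n - p‖ := by
            have h1 : ‖x n - T (x n)‖ = ε n := by rw [hε, norm_sub_rev]
            have h2 := hne (x n) (hxC n) p hpC
            linarith
    have hsq : ‖x n - T p‖ ^ 2 ≤ (ε n + ‖x n - p‖) ^ 2 :=
      pow_le_pow_left₀ (norm_nonneg _) htri 2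
    have hexpand : (ε n + ‖x n - p‖) ^ 2 =
        ε n ^ 2 + 2 * ε n * ‖x n - p‖ + ‖x n - p‖ ^ 2 := by ring
    nlinarith [hexp, hsq, hexpand, hxnp, hεnn n]
  -- Step 4: take limits
  have hlim : Filter.Tendsto
      (fun n => 2 * ε n * (M + ‖p‖) + ε n ^ 2 - 2 * (inner ℝ (x n - p) (p - T p) : ℝ))
      Filter.atTop (nhds 0) := by
    have h1 : Filter.Tendsto (fun n => 2 * ε n * (M + ‖p‖)) Filter.atTop (nhds 0) := by
      have := (hTx.const_mul 2).mul_const (M + ‖p‖)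
      simpa using this
    have h2 : Filter.Tendsto (fun n => ε n ^ 2) Filter.atTop (nhds 0) := by
      have := hTx.mul hTx
      simpa [sq] using this
    have h3 : Filter.Tendsto (fun n => 2 * (inner ℝ (x n - p) (p - T p) : ℝ))
        Filter.atTop (nhds 0) := by
      have := (hweak' (p - T p)).const_mul 2
      simpa using this
    have := (h1.add h2).sub h3
    simpa using this
  have hfinal : ‖p - T p‖ ^ 2 ≤ 0 :=
    ge_of_tendsto' hlim key
  have : ‖p - T p‖ = 0 := by nlinarith [norm_nonneg (p - T p)]
  have : p - T p = 0 := norm_eq_zero.mp this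
  have : p = T p := by rwa [sub_eq_zero] at this
  exact this.symm
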